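/- Let (φ_n) be measurable functions on ℝ such that for each n and each k ∈ ℤ, the function φ_n − k changes its sign at most once on ℝ (in the sense that there is s_k with φ_n ≤ k a.e. on (−∞, s_k) and φ_n ≥ k a.e. on (s_k, ∞), or the reverse). If the measures φ_n(s) ds converge vaguely on ℝ to φ(s) ds for a locally integrable function φ, then for every k ∈ ℤ the measure (φ(s) − k) ds also changes its sign at most once. -/

import Mathlib

open Filter Set MeasureTheory

/-- The measure `ψ(s) ds` changes its sign at most once: there is `s₀ ∈ [-∞, ∞]` with
`ψ ≤ 0` a.e. below `s₀` and `ψ ≥ 0` a.e. above `s₀`, or the reverse. -/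
def SignChangeAtMostOnce (ψ : ℝ → ℝ) : Prop :=
  ∃ s₀ : EReal,
    ((∀ᵐ s : ℝ, (s : EReal) < s₀ → ψ s ≤ 0) ∧ (∀ᵐ s : ℝ, s₀ < (s : EReal) → 0 ≤ ψ s)) ∨
    ((∀ᵐ s : ℝ, (s : EReal) < s₀ → 0 ≤ ψ s) ∧ (∀ᵐ s : ℝ, s₀ < (s : EReal) → ψ s ≤ 0))

lemma ae_nonpos_on_of_tests (ψ : ℝ → ℝ) (hψ : LocallyIntegrable ψ)
    (U : Set ℝ) (hU : IsOpen U)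
    (h : ∀ u : ℝ → ℝ, Continuous u → HasCompactSupport u → (∀ s, 0 ≤ u s) →
      tsupport u ⊆ U → ∫ s : ℝ, u s * ψ s ≤ 0) :
    ∀ᵐ s : ℝ, s ∈ U → ψ s ≤ 0 := by
  -- Step 1: integrals over closed intervals inside `U` are nonpositive.
  have hIcc : ∀ c d : ℝ, Icc c d ⊆ U → ∫ s in Icc c d, ψ s ≤ 0 := by
    intro c d hcd
    rcases lt_or_ge d c with hlt | hle
    · simp [Icc_eq_empty_of_lt hlt]
    set K : Set ℝ := Icc c d with hKdef
    have hKcpt : IsCompact K := isCompact_Icc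
    have hne : K.Nonempty := nonempty_Icc.2 hle
    obtain ⟨δ, hδ, hδU⟩ := hKcpt.exists_thickening_subset_open hU hcd
    set K₀ : Set ℝ := Metric.cthickening (δ/2) K with hK₀def
    have hK₀cpt : IsCompact K₀ := hKcpt.cthickening
    have hK₀U : K₀ ⊆ U :=
      (Metric.cthickening_subset_thickening' hδ (by linarith) K).trans hδU
    set ε : ℕ → ℝ := fun m => (δ/2) * (1/(m+1)) with hεdef
    have hεpos : ∀ m, 0 < ε m := by
      intro m
      have : (0:ℝ) < (m:ℝ) + 1 := by positivity
      positivity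
    have hεle : ∀ m, ε m ≤ δ/2 := by
      intro m
      have h1 : (1:ℝ) ≤ (m:ℝ) + 1 := by
        have := Nat.cast_nonneg (α := ℝ) m; linarith
      have : (1:ℝ)/((m:ℝ)+1) ≤ 1 := by
        rw [div_le_one (by linarith)]; exact h1
      calc ε m ≤ (δ/2) * 1 := by
            apply mul_le_mul_of_nonneg_left this (by linarith)
        _ = δ/2 := mul_one _
    have hεlim : Tendsto ε atTop (nhds 0) := by
      have := tendsto_one_div_add_atTop_nhds_zero_nat (𝕜 := ℝ)
      simpa [hεdef] using this.const_mul (δ/2)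
    set v : ℕ → ℝ → ℝ := fun m s => max 0 (1 - Metric.infDist s K / ε m) with hvdef
    have hvcont : ∀ m, Continuous (v m) :=
      fun m => continuous_const.max
        (continuous_const.sub ((Metric.continuous_infDist_pt K).div_const _))
    have hvnonneg : ∀ m s, 0 ≤ v m s := fun m s => le_max_left _ _
    have hvle : ∀ m s, v m s ≤ 1 := by
      intro m s
      apply max_le (by norm_num)
      have h1 : 0 ≤ Metric.infDist s K / ε m :=
        div_nonneg Metric.infDist_nonneg (hεpos m).le
      linarith
    have hvone : ∀ m, ∀ s ∈ K, v m s = 1 := by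
      intro m s hs
      simp [hvdef, Metric.infDist_zero_of_mem hs]
    have hvsupp : ∀ m, tsupport (v m) ⊆ K₀ := by
      intro m
      have hsupp : Function.support (v m) ⊆ Metric.thickening (ε m) K := by
        intro s hs
        rw [Metric.mem_thickening_iff_infDist_lt hne]
        by_contra hcon
        push_neg at hcon
        have : 1 - Metric.infDist s K / ε m ≤ 0 := by
          have := (div_le_div_iff_of_pos_right (hεpos m)).2 hcon
          rw [div_self (hεpos m).ne'] at this
          linarith [((one_le_div (hεpos m)).2 hcon)]
        exact hs (by simp [hvdef, max_eq_left this])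
      refine closure_minimal (hsupp.trans ?_) Metric.isClosed_cthickening
      exact (Metric.thickening_subset_cthickening _ _).trans
        (Metric.cthickening_mono (hεle m) K)
    have hvHCS : ∀ m, HasCompactSupport (v m) := fun m =>
      HasCompactSupport.of_support_subset_isCompact hK₀cpt
        ((subset_tsupport _).trans (hvsupp m))
    -- dominated convergence
    have hmeasK₀ : MeasurableSet K₀ := hK₀cpt.measurableSet
    have hboundint : Integrable (K₀.indicator fun s => |ψ s|) := by
      rw [integrable_indicator_iff hmeasK₀]
      exact (hψ.integrableOn_isCompact hK₀cpt).norm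
    have hlim : Tendsto (fun m => ∫ s : ℝ, v m s * ψ s) atTop
        (nhds (∫ s : ℝ, K.indicator ψ s)) := by
      apply tendsto_integral_of_dominated_convergence (K₀.indicator fun s => |ψ s|)
      · exact fun m => ((hvcont m).aestronglyMeasurable).mul hψ.aestronglyMeasurable
      · exact hboundint
      · intro m
        refine Eventually.of_forall fun s => ?_
        by_cases hs : s ∈ K₀
        · rw [indicator_of_mem hs]
          have : ‖v m s * ψ s‖ = v m s * |ψ s| := by
            rw [Real.norm_eq_abs, abs_mul, abs_of_nonneg (hvnonneg m s)]
          rw [this]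
          calc v m s * |ψ s| ≤ 1 * |ψ s| :=
                mul_le_mul_of_nonneg_right (hvle m s) (abs_nonneg _)
            _ = |ψ s| := one_mul _
        · have : v m s = 0 :=
            image_eq_zero_of_notMem_tsupport (fun hc => hs (hvsupp m hc))
          simp [this, indicator_of_notMem hs]
      · refine Eventually.of_forall fun s => ?_
        by_cases hs : s ∈ K
        · have : ∀ m, v m s * ψ s = K.indicator ψ s := by
            intro m
            rw [hvone m s hs, one_mul, indicator_of_mem hs]
          simpa [this] using tendsto_const_nhds (x := K.indicator ψ s)
        · have hpos : 0 < Metric.infDist s K :=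
            (isClosed_Icc.notMem_iff_infDist_pos hne).1 hs
          have hev : ∀ᶠ m in atTop, v m s * ψ s = 0 := by
            filter_upwards [hεlim.eventually (eventually_lt_nhds hpos)] with m hm
            have : 1 - Metric.infDist s K / ε m ≤ 0 := by
              have : 1 < Metric.infDist s K / ε m := (one_lt_div (hεpos m)).2 hm
              linarith
            simp [hvdef, max_eq_left this]
          rw [indicator_of_notMem hs]
          exact Tendsto.congr' (hev.mono fun m hm => hm.symm) tendsto_const_nhds
    have hint : ∫ s : ℝ, K.indicator ψ s = ∫ s in K, ψ s :=
      integral_indicator measurableSet_Icc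
    rw [← hint]
    refine le_of_tendsto hlim (Eventually.of_forall fun m => ?_)
    exact h (v m) (hvcont m) (hvHCS m) (hvnonneg m) ((hvsupp m).trans hK₀U)
  -- Step 2: Lebesgue differentiation
  filter_upwards [IsUnifLocDoublingMeasure.ae_tendsto_average
    (μ := (volume : Measure ℝ)) hψ 1] with x hx hxU
  obtain ⟨r₀, hr₀, hball⟩ := Metric.isOpen_iff.1 hU x hxU
  set r₁ := r₀ / 2 with hr₁def
  have hr₁ : 0 < r₁ := by positivity
  set δ : ℕ → ℝ := fun j => r₁ * (1/(j+1)) with hδdef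
  have hδpos : ∀ j, 0 < δ j := by
    intro j
    have : (0:ℝ) < (j:ℝ) + 1 := by positivity
    positivity
  have hδle : ∀ j, δ j ≤ r₁ := by
    intro j
    have h1 : (1:ℝ) ≤ (j:ℝ) + 1 := by
      have := Nat.cast_nonneg (α := ℝ) j; linarith
    have : (1:ℝ)/((j:ℝ)+1) ≤ 1 := by
      rw [div_le_one (by linarith)]; exact h1
    calc δ j ≤ r₁ * 1 := mul_le_mul_of_nonneg_left this hr₁.le
      _ = r₁ := mul_one _
  have hδlim : Tendsto δ (atTop : Filter ℕ) (nhdsWithin 0 (Ioi 0)) := by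
    apply tendsto_nhdsWithin_of_tendsto_nhds_of_eventually_within
    · have := tendsto_one_div_add_atTop_nhds_zero_nat (𝕜 := ℝ)
      simpa [hδdef] using this.const_mul r₁
    · exact Eventually.of_forall fun j => hδpos j
  have hmem : ∀ᶠ j in (atTop : Filter ℕ), x ∈ Metric.closedBall x (1 * δ j) :=
    Eventually.of_forall fun j => by
      simp [Metric.mem_closedBall, (hδpos j).le]
  have htend := hx (fun _ => x) δ hδlim hmem
  refine le_of_tendsto htend (Eventually.of_forall fun j => ?_)
  have hsub : Metric.closedBall x (δ j) ⊆ U := by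
    refine (Metric.closedBall_subset_ball ?_).trans hball
    calc δ j ≤ r₁ := hδle j
      _ < r₀ := by rw [hr₁def]; linarith
  have hint : ∫ s in Metric.closedBall x (δ j), ψ s ≤ 0 := by
    have := hIcc (x - δ j) (x + δ j) (by rwa [← Real.closedBall_eq_Icc])
    rwa [← Real.closedBall_eq_Icc] at this
  rw [setAverage_eq]
  have hc : (0:ℝ) ≤ ((volume (Metric.closedBall x (δ j))).toReal)⁻¹ := by positivity
  calc ((volume (Metric.closedBall x (δ j))).toReal)⁻¹ • ∫ s in Metric.closedBall x (δ j), ψ s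
      ≤ ((volume (Metric.closedBall x (δ j))).toReal)⁻¹ • (0:ℝ) := by
        rw [smul_eq_mul, smul_eq_mul]
        exact mul_le_mul_of_nonneg_left hint hc
    _ = 0 := smul_zero _

lemma key_limit (ψseq : ℕ → ℝ → ℝ) (ψ : ℝ → ℝ)
    (hψ : LocallyIntegrable ψ)
    (F : Filter ℕ) [F.NeBot] (hF : F ≤ atTop)
    (σ : ℕ → EReal)
    (hbelow : ∀ᶠ n in F, ∀ᵐ t : ℝ, (t : EReal) < σ n → ψseq n t ≤ 0)
    (habove : ∀ᶠ n in F, ∀ᵐ t : ℝ, σ n < (t : EReal) → 0 ≤ ψseq n t)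
    (hconv : ∀ u : ℝ → ℝ, Continuous u → HasCompactSupport u →
      Tendsto (fun n => ∫ t : ℝ, u t * ψseq n t) atTop (nhds (∫ t : ℝ, u t * ψ t))) :
    ∃ s₀ : EReal, (∀ᵐ t : ℝ, (t : EReal) < s₀ → ψ t ≤ 0) ∧
      (∀ᵐ t : ℝ, s₀ < (t : EReal) → 0 ≤ ψ t) := by
  set s₀ : EReal := Filter.limsup σ F with hs₀
  refine ⟨s₀, ?_, ?_⟩
  · -- below s₀ : ψ ≤ 0 a.e.
    have := ae_nonpos_on_of_tests ψ hψ {t : ℝ | (t : EReal) < s₀}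
      (isOpen_Iio.preimage continuous_coe_real_ereal) ?_
    · filter_upwards [this] with t ht h't; exact ht h't
    intro u hu hcu hunn husupp
    rcases eq_or_ne u 0 with rfl | hune
    · simp
    have hsuppne : (tsupport u).Nonempty := by
      rcases Function.ne_iff.1 hune with ⟨t, ht⟩
      exact ⟨t, subset_tsupport u ht⟩
    set b' : ℝ := sSup (tsupport u) with hb'
    have hb'mem : b' ∈ tsupport u := hcu.sSup_mem hsuppne
    have hb's₀ : (b' : EReal) < s₀ := husupp hb'mem
    obtain ⟨b, hb1, hb2⟩ := EReal.exists_between_coe_real hb's₀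
    have hfreq : ∃ᶠ n in F, (b : EReal) < σ n :=
      frequently_lt_of_lt_limsup (by isBoundedDefault) hb2
    set F' : Filter ℕ := F ⊓ 𝓟 {n | (b : EReal) < σ n} with hF'
    haveI : F'.NeBot := frequently_iff_neBot.1 hfreq
    have htend : Tendsto (fun n => ∫ t : ℝ, u t * ψseq n t) F'
        (nhds (∫ t : ℝ, u t * ψ t)) :=
      (hconv u hu hcu).mono_left ((inf_le_left.trans hF))
    refine le_of_tendsto htend ?_
    have hev : ∀ᶠ n in F', (b : EReal) < σ n := by
      rw [hF', eventually_inf_principal]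
      exact Eventually.of_forall fun n hn => hn
    have hbel' : ∀ᶠ n in F', ∀ᵐ t : ℝ, (t : EReal) < σ n → ψseq n t ≤ 0 :=
      hbelow.filter_mono inf_le_left
    filter_upwards [hev, hbel'] with n hn hae
    refine integral_nonpos_of_ae ?_
    filter_upwards [hae] with t ht
    by_cases hts : u t = 0
    · simp [hts]
    have htb' : t ≤ b' := le_csSup hcu.isBounded.bddAbove (subset_tsupport u hts)
    have : (t : EReal) < σ n := by
      refine lt_of_le_of_lt ?_ hn
      exact_mod_cast le_trans (EReal.coe_le_coe_iff.2 htb') hb1.le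
    exact mul_nonpos_of_nonneg_of_nonpos (hunn t) (ht this)
  · -- above s₀ : ψ ≥ 0 a.e.
    have := ae_nonpos_on_of_tests (fun t => -ψ t) hψ.neg {t : ℝ | s₀ < (t : EReal)}
      (isOpen_Ioi.preimage continuous_coe_real_ereal) ?_
    · filter_upwards [this] with t ht h't
      have := ht h't; linarith
    intro u hu hcu hunn husupp
    rcases eq_or_ne u 0 with rfl | hune
    · simp
    have hsuppne : (tsupport u).Nonempty := by
      rcases Function.ne_iff.1 hune with ⟨t, ht⟩
      exact ⟨t, subset_tsupport u ht⟩
    set a' : ℝ := sInf (tsupport u) with ha'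
    have ha'mem : a' ∈ tsupport u := hcu.sInf_mem hsuppne
    have ha's₀ : s₀ < (a' : EReal) := husupp ha'mem
    obtain ⟨a, ha1, ha2⟩ := EReal.exists_between_coe_real ha's₀
    have hevF : ∀ᶠ n in F, σ n < (a : EReal) :=
      eventually_lt_of_limsup_lt ha1 (by isBoundedDefault)
    have hI : ∀ t : ℝ, u t * -ψ t = -(u t * ψ t) := fun t => by ring
    have htend : Tendsto (fun n => ∫ t : ℝ, u t * -ψseq n t) F
        (nhds (∫ t : ℝ, u t * -ψ t)) := by
      have h1 : Tendsto (fun n => -∫ t : ℝ, u t * ψseq n t) atTop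
          (nhds (-∫ t : ℝ, u t * ψ t)) := (hconv u hu hcu).neg
      have h2 : ∀ n, (∫ t : ℝ, u t * -ψseq n t) = -∫ t : ℝ, u t * ψseq n t := by
        intro n
        rw [← integral_neg]
        congr 1; ext t; ring
      have h3 : (∫ t : ℝ, u t * -ψ t) = -∫ t : ℝ, u t * ψ t := by
        rw [← integral_neg]
        congr 1; ext t; ring
      rw [h3]
      exact (h1.congr fun n => (h2 n).symm).mono_left hF
    refine le_of_tendsto htend ?_
    filter_upwards [hevF, habove] with n hn hae
    refine integral_nonpos_of_ae ?_
    filter_upwards [hae] with t ht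
    by_cases hts : u t = 0
    · simp [hts]
    have hta' : a' ≤ t := csInf_le hcu.isBounded.bddBelow (subset_tsupport u hts)
    have : σ n < (t : EReal) := by
      refine lt_trans hn ?_
      exact_mod_cast lt_of_lt_of_le ha2 (EReal.coe_le_coe_iff.2 hta')
    have h0 : 0 ≤ ψseq n t := ht this
    have : u t * -ψseq n t = -(u t * ψseq n t) := by ring
    rw [this]
    exact neg_nonpos.2 (mul_nonneg (hunn t) h0)

theorem stmt_17 (φseq : ℕ → ℝ → ℝ) (φ : ℝ → ℝ)
    (hmeas : ∀ n, Measurable (φseq n))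
    (hloc : ∀ n, LocallyIntegrable (φseq n))
    (hφloc : LocallyIntegrable φ)
    (hsign : ∀ n, ∀ k : ℤ, SignChangeAtMostOnce (fun s => φseq n s - k))
    (hvague : ∀ u : ℝ → ℝ, Continuous u → HasCompactSupport u →
      Tendsto (fun n => ∫ s : ℝ, u s * φseq n s) atTop (nhds (∫ s : ℝ, u s * φ s))) :
    ∀ k : ℤ, SignChangeAtMostOnce (fun s => φ s - k) := by
  intro k
  set ψ : ℝ → ℝ := fun s => φ s - k with hψdef
  set ψs : ℕ → ℝ → ℝ := fun n s => φseq n s - k with hψsdef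
  have hψloc : LocallyIntegrable ψ := hφloc.sub (locallyIntegrable_const _)
  have hconv : ∀ u : ℝ → ℝ, Continuous u → HasCompactSupport u →
      Tendsto (fun n => ∫ t : ℝ, u t * ψs n t) atTop (nhds (∫ t : ℝ, u t * ψ t)) := by
    intro u hu hcu
    have hint : ∀ g : ℝ → ℝ, LocallyIntegrable g → Integrable (fun t => u t * g t) :=
      fun g hg => by
        simpa [smul_eq_mul] using hg.integrable_smul_left_of_hasCompactSupport hu hcu
    have huint : Integrable u := hu.integrable_of_hasCompactSupport hcu
    have hsplit : ∀ g : ℝ → ℝ, LocallyIntegrable g →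
        (∫ t : ℝ, u t * (g t - (k : ℝ))) =
          (∫ t : ℝ, u t * g t) - ∫ t : ℝ, u t * (k : ℝ) := by
      intro g hg
      have heq : (fun t : ℝ => u t * (g t - (k : ℝ)))
          = fun t => u t * g t - u t * (k : ℝ) := by ext t; ring
      rw [heq, integral_sub (hint g hg) (huint.mul_const _)]
    have h1 := (hvague u hu hcu).sub
      (tendsto_const_nhds (x := ∫ t : ℝ, u t * (k : ℝ)))
    rw [← hsplit φ hφloc] at h1
    exact h1.congr fun n => (hsplit (φseq n) (hloc n)).symm
  have hsign' : ∀ n, ∃ s₀ : EReal,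
      ((∀ᵐ t : ℝ, (t : EReal) < s₀ → ψs n t ≤ 0) ∧
        (∀ᵐ t : ℝ, s₀ < (t : EReal) → 0 ≤ ψs n t)) ∨
      ((∀ᵐ t : ℝ, (t : EReal) < s₀ → 0 ≤ ψs n t) ∧
        (∀ᵐ t : ℝ, s₀ < (t : EReal) → ψs n t ≤ 0)) := fun n => hsign n k
  choose σ hσ using hsign'
  set S : Set ℕ := {n | (∀ᵐ t : ℝ, (t : EReal) < σ n → ψs n t ≤ 0) ∧
    (∀ᵐ t : ℝ, σ n < (t : EReal) → 0 ≤ ψs n t)} with hSdef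
  by_cases hfreq : ∃ᶠ n in atTop, n ∈ S
  · set F : Filter ℕ := atTop ⊓ 𝓟 S with hFdef
    haveI : F.NeBot := frequently_iff_neBot.1 hfreq
    have hbelow : ∀ᶠ n in F, ∀ᵐ t : ℝ, (t : EReal) < σ n → ψs n t ≤ 0 := by
      rw [hFdef, eventually_inf_principal]
      exact Eventually.of_forall fun n hn => hn.1
    have habove : ∀ᶠ n in F, ∀ᵐ t : ℝ, σ n < (t : EReal) → 0 ≤ ψs n t := by
      rw [hFdef, eventually_inf_principal]
      exact Eventually.of_forall fun n hn => hn.2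
    obtain ⟨s₀, h1, h2⟩ := key_limit ψs ψ hψloc F inf_le_left σ hbelow habove hconv
    exact ⟨s₀, Or.inl ⟨h1, h2⟩⟩
  · have hev : ∀ᶠ n in atTop, n ∉ S := not_frequently.1 hfreq
    have hconv' : ∀ u : ℝ → ℝ, Continuous u → HasCompactSupport u →
        Tendsto (fun n => ∫ t : ℝ, u t * -ψs n t) atTop
          (nhds (∫ t : ℝ, u t * -ψ t)) := by
      intro u hu hcu
      have h2 : ∀ g : ℝ → ℝ, (∫ t : ℝ, u t * -g t) = -∫ t : ℝ, u t * g t := by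
        intro g
        rw [← integral_neg]
        congr 1; ext t; ring
      rw [h2]
      exact ((hconv u hu hcu).neg).congr fun n => (h2 (ψs n)).symm
    have hbelow : ∀ᶠ n in atTop, ∀ᵐ t : ℝ, (t : EReal) < σ n → -ψs n t ≤ 0 := by
      filter_upwards [hev] with n hn
      have hB := (hσ n).resolve_left hn
      filter_upwards [hB.1] with t ht h't
      simpa using ht h't
    have habove : ∀ᶠ n in atTop, ∀ᵐ t : ℝ, σ n < (t : EReal) → 0 ≤ -ψs n t := by
      filter_upwards [hev] with n hn
      have hB := (hσ n).resolve_left hn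
      filter_upwards [hB.2] with t ht h't
      simpa using ht h't
    obtain ⟨s₀, h1, h2⟩ := key_limit (fun n t => -ψs n t) (fun t => -ψ t)
      hψloc.neg atTop le_rfl σ hbelow habove hconv'
    refine ⟨s₀, Or.inr ⟨?_, ?_⟩⟩
    · filter_upwards [h1] with t ht h't
      have := ht h't; simpa using this
    · filter_upwards [h2] with t ht h't
      have := ht h't; simpa using this
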